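/- Let C be the convex cone of vectors u ∈ (ℝ≥0)^3 such that (u_1 - u_2, u_2 - u_3, u_3 - u_1) ≥_lex (0,0,0) and (u_1 - u_3, u_2 - u_1, u_3 - u_2) ≥_lex (0,0,0). Then C is not closed in ℝ^3: the vector (1,0,1) is not in C, but (1+ε, 0, 1) is in C for every ε > 0. -/
import Mathlib


/-- `(a,b,c) ≥_lex (0,0,0)`: first nonzero entry is positive, or all are zero. -/
def lex3 (a b c : ℝ) : Prop := 0 < a ∨ (a = 0 ∧ 0 < b) ∨ (a = 0 ∧ b = 0 ∧ 0 ≤ c)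

/-- The initial cone of A₃-invariants for the lexicographic order x₁ > x₂ > x₃. -/
def coneA3 : Set (Fin 3 → ℝ) :=
  {u | (∀ i, 0 ≤ u i) ∧ lex3 (u 0 - u 1) (u 1 - u 2) (u 2 - u 0) ∧
       lex3 (u 0 - u 2) (u 1 - u 0) (u 2 - u 1)}

lemma notmem6 : (![1, 0, 1] : Fin 3 → ℝ) ∉ coneA3 := by
  rintro ⟨-, -, h⟩
  simp [lex3, Matrix.cons_val_zero, Matrix.cons_val_one] at h
  norm_num at h

lemma mem6 : ∀ ε : ℝ, 0 < ε → (![1 + ε, 0, 1] : Fin 3 → ℝ) ∈ coneA3 := by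
  intro ε hε
  refine ⟨?_, ?_, ?_⟩
  · intro i
    fin_cases i <;> simp <;> linarith
  · left; simp; linarith
  · left; simp; linarith

/-- the initial cone of A₃ is not closed: (1,0,1) ∉ C but
(1+ε,0,1) ∈ C for all ε > 0. -/
theorem stmt_6 :
    ¬ IsClosed coneA3 ∧ (![1, 0, 1] : Fin 3 → ℝ) ∉ coneA3 ∧
      ∀ ε : ℝ, 0 < ε → (![1 + ε, 0, 1] : Fin 3 → ℝ) ∈ coneA3 := by
  refine ⟨?_, notmem6, mem6⟩
  intro hC
  have htend : Filter.Tendsto (fun ε : ℝ => (![1 + ε, 0, 1] : Fin 3 → ℝ))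
      (nhdsWithin 0 (Set.Ioi 0)) (nhds ![1, 0, 1]) := by
    have hc : Continuous (fun ε : ℝ => (![1 + ε, 0, 1] : Fin 3 → ℝ)) := by
      refine continuous_pi fun i => ?_
      fin_cases i <;> simp <;> fun_prop
    have := hc.tendsto 0
    simp only [add_zero] at this
    exact this.mono_left nhdsWithin_le_nhds
  have hev : ∀ᶠ ε in nhdsWithin (0:ℝ) (Set.Ioi 0),
      (![1 + ε, 0, 1] : Fin 3 → ℝ) ∈ coneA3 :=
    eventually_mem_nhdsWithin.mono (fun ε hε => mem6 ε hε)
  exact notmem6 (hC.mem_of_tendsto htend hev)
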